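/- Let E be a real inner product space, let s > 0 and γ > 0 be real numbers, and let σ, u ∈ E. Then the Tresca friction conditions hold, i.e. (if u = 0 then ‖σ‖ ≤ s, and if u ≠ 0 then σ = −(s/‖u‖) • u), if and only if σ = [σ − γ • u]ₛ (the Alart–Curnier reformulation of the Tresca friction conditions). -/

import Mathlib

open scoped RealInnerProductSpace

variable {E : Type*} [NormedAddCommGroup E] [InnerProductSpace ℝ E]

/-- Projection of `x` onto the closed ball of radius `r` centered at the origin:
`[x]ᵣ := x` if `‖x‖ ≤ r`, and `[x]ᵣ := (r / ‖x‖) • x` otherwise. -/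
noncomputable def ballProj (r : ℝ) (x : E) : E :=
  if ‖x‖ ≤ r then x else (r / ‖x‖) • x

/-- **Alart–Curnier reformulation of the Tresca friction conditions.**
For `s > 0` and `γ > 0`, the Tresca friction conditions hold iff
`σ = [σ - γ • u]ₛ`. -/
theorem tresca_iff_alartCurnier (s γ : ℝ) (hs : 0 < s) (hγ : 0 < γ) (σ u : E) :
    ((u = 0 → ‖σ‖ ≤ s) ∧ (u ≠ 0 → σ = -(s / ‖u‖) • u)) ↔
      σ = ballProj s (σ - γ • u) := by
  constructor
  · rintro ⟨h0, h1⟩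
    by_cases hu : u = 0
    · subst hu
      simp [ballProj, h0 rfl]
    · have hσ := h1 hu
      have hun : (0:ℝ) < ‖u‖ := norm_pos_iff.2 hu
      have hx : σ - γ • u = -(s / ‖u‖ + γ) • u := by rw [hσ]; module
      have hnx : ‖σ - γ • u‖ = s + γ * ‖u‖ := by
        rw [hx, norm_smul, Real.norm_eq_abs, abs_of_nonpos (neg_nonpos.2 (by positivity))]
        field_simp
      rw [ballProj, if_neg (by rw [hnx]; nlinarith)]
      rw [hnx, hx, hσ, smul_smul]
      congr 1
      field_simp
  · intro h
    by_cases hu : u = 0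
    · refine ⟨fun _ => ?_, fun h' => absurd hu h'⟩
      subst hu
      simp only [smul_zero, sub_zero, ballProj] at h
      by_cases hσs : ‖σ‖ ≤ s
      · exact hσs
      · exfalso
        rw [if_neg hσs] at h
        have hσn : (0:ℝ) < ‖σ‖ := lt_trans hs (lt_of_not_ge hσs)
        have : ‖σ‖ = s := by
          conv_lhs => rw [h]
          rw [norm_smul, Real.norm_eq_abs, abs_of_pos (by positivity)]
          field_simp
        exact hσs (le_of_eq this)
    · refine ⟨fun h' => absurd h' hu, fun _ => ?_⟩
      have hun : (0:ℝ) < ‖u‖ := norm_pos_iff.2 hu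
      set x := σ - γ • u with hxdef
      by_cases hxs : ‖x‖ ≤ s
      · exfalso
        rw [ballProj, if_pos hxs] at h
        have : γ • u = 0 := by
          have := h
          rw [hxdef] at this
          have h2 : σ - (σ - γ • u) = 0 := by rw [← this]; abel
          simpa using h2
        exact hu ((smul_eq_zero.1 this).resolve_left (ne_of_gt hγ))
      · push_neg at hxs
        have hxn : (0:ℝ) < ‖x‖ := lt_trans hs hxs
        rw [ballProj, if_neg (not_le.2 hxs)] at h
        set t : ℝ := 1 - s / ‖x‖ with htdef
        have ht : 0 < t := by
          rw [htdef]
          have : s / ‖x‖ < 1 := (div_lt_one hxn).2 hxs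
          linarith
        have key : t • x = -γ • u := by
          rw [htdef, sub_smul, one_smul, ← h]
          show (σ - γ • u) - σ = -γ • u
          module
        have hxeq : x = (t⁻¹ * -γ) • u := by
          rw [mul_smul, ← key, smul_smul, inv_mul_cancel₀ (ne_of_gt ht), one_smul]
        have hnorm : t * ‖x‖ = γ * ‖u‖ := by
          have := congrArg norm key
          rw [norm_smul, norm_smul, Real.norm_eq_abs, Real.norm_eq_abs,
            abs_of_pos ht, abs_of_nonpos (by linarith : -γ ≤ 0)] at this
          linarith [this]
        have hxu : ‖x‖ = γ * ‖u‖ / t := by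
          rw [eq_div_iff (ne_of_gt ht)]
          linarith [hnorm]
        rw [h]
        nth_rewrite 2 [hxeq]
        rw [smul_smul]
        congr 1
        rw [hxu]
        field_simp
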